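/- There exists an absolute constant C > 0 such that for every n ∈ S and every x ∈ 𝕋² with r_n(x)² ≠ 1, all entries of the 2×2 matrices X(x) and Y(x) are bounded in absolute value by C. -/

import Mathlib

open scoped Real

noncomputable section

/-- The set of integers expressible as a sum of two squares. -/
def S : Set ℤ := {n | ∃ a b : ℤ, n = a ^ 2 + b ^ 2}

/-- The set of lattice points on the circle of radius `√n`. -/
def En (n : ℤ) : Set (ℤ × ℤ) := {l | l.1 ^ 2 + l.2 ^ 2 = n}

/-- The number of lattice points on the circle of radius `√n`. -/
def Nn (n : ℤ) : ℕ := (En n).ncard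

/-- Euclidean norm of a lattice point. -/
def latNorm (v : ℤ × ℤ) : ℝ := Real.sqrt ((v.1 : ℝ) ^ 2 + (v.2 : ℝ) ^ 2)

/-- The set of length-`l` spectral quasi-correlations. -/
def Cn (n : ℤ) (l : ℕ) (K : ℝ) : Set (Fin l → ℤ × ℤ) :=
  {lam | (∀ i, lam i ∈ En n) ∧ 0 < latNorm (∑ i, lam i) ∧ latNorm (∑ i, lam i) ≤ K}

/-- The covariance function `r_n(x) = (1/N_n) ∑_{λ ∈ E_n} cos(2π⟨λ,x⟩)`, viewed as a
`ℤ²`-periodic function on `ℝ²` (for `s ≤ 1/2` the centred toral ball is identified with the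
Euclidean one). -/
def rn (n : ℤ) (x : EuclideanSpace ℝ (Fin 2)) : ℝ :=
  (Nn n : ℝ)⁻¹ * ∑ᶠ lam ∈ En n, Real.cos (2 * π * ((lam.1 : ℝ) * x 0 + (lam.2 : ℝ) * x 1))

/-- The gradient `D(x) = ∇r_n(x)` of `r_n`, given by the lattice sum
`D_i(x) = -(2π/N_n) ∑_{λ ∈ E_n} sin(2π⟨λ,x⟩) λ_i`. -/
def Dn (n : ℤ) (x : EuclideanSpace ℝ (Fin 2)) (i : Fin 2) : ℝ :=
  -(2 * π) * (Nn n : ℝ)⁻¹ * ∑ᶠ lam ∈ En n,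
    Real.sin (2 * π * ((lam.1 : ℝ) * x 0 + (lam.2 : ℝ) * x 1)) * ![(lam.1 : ℝ), (lam.2 : ℝ)] i

/-- The Hessian `H(x)` of `r_n`, given by the lattice sum
`H_{ij}(x) = -(4π²/N_n) ∑_{λ ∈ E_n} cos(2π⟨λ,x⟩) λ_i λ_j`. -/
def Hn (n : ℤ) (x : EuclideanSpace ℝ (Fin 2)) : Matrix (Fin 2) (Fin 2) ℝ :=
  Matrix.of fun i j => -(4 * π ^ 2) * (Nn n : ℝ)⁻¹ * ∑ᶠ lam ∈ En n,
    Real.cos (2 * π * ((lam.1 : ℝ) * x 0 + (lam.2 : ℝ) * x 1)) *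
      ![(lam.1 : ℝ), (lam.2 : ℝ)] i * ![(lam.1 : ℝ), (lam.2 : ℝ)] j

/-- The matrix `X(x) = -(2/(E(1 - r_n(x)²))) D(x)ᵗD(x)`, where `E = 4π²n`. -/
def Xmat (n : ℤ) (x : EuclideanSpace ℝ (Fin 2)) : Matrix (Fin 2) (Fin 2) ℝ :=
  Matrix.of fun i j =>
    -(2 / (4 * π ^ 2 * (n : ℝ) * (1 - rn n x ^ 2))) * (Dn n x i * Dn n x j)

/-- The matrix `Y(x) = -(2/E)(H(x) + (r_n(x)/(1 - r_n(x)²)) D(x)ᵗD(x))`, where `E = 4π²n`. -/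
def Ymat (n : ℤ) (x : EuclideanSpace ℝ (Fin 2)) : Matrix (Fin 2) (Fin 2) ℝ :=
  Matrix.of fun i j =>
    -(2 / (4 * π ^ 2 * (n : ℝ))) *
      (Hn n x i j + (rn n x / (1 - rn n x ^ 2)) * (Dn n x i * Dn n x j))


set_option maxHeartbeats 1000000 in
lemma En_finite (n : ℤ) : (En n).Finite := by
  apply Set.Finite.subset (Set.finite_Icc (-n, -n) (n, n))
  intro l hl
  have h : l.1 ^ 2 + l.2 ^ 2 = n := hl
  constructor
  · constructor <;> dsimp <;>
      nlinarith [sq_nonneg (l.1+1), sq_nonneg (l.2+1), sq_nonneg l.1, sq_nonneg l.2]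
  · constructor <;> dsimp <;>
      nlinarith [sq_nonneg (l.1-1), sq_nonneg (l.2-1), sq_nonneg l.1, sq_nonneg l.2]

set_option maxHeartbeats 1000000 in
theorem X_Y_entries_uniformly_bounded :
    ∃ C : ℝ, 0 < C ∧ ∀ n : ℤ, n ∈ S → ∀ x : EuclideanSpace ℝ (Fin 2),
      rn n x ^ 2 ≠ 1 → ∀ i j : Fin 2, |Xmat n x i j| ≤ C ∧ |Ymat n x i j| ≤ C := by
  refine ⟨4, by norm_num, ?_⟩
  intro n hn x hr i j
  by_cases hn0 : (n : ℝ) = 0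
  · constructor
    · norm_num [Xmat, hn0]
    · norm_num [Ymat, hn0]
  have hn1 : (1 : ℝ) ≤ (n : ℝ) := by
    obtain ⟨a, b, hab⟩ := hn
    have h0 : 0 ≤ n := by rw [hab]; positivity
    have : n ≠ 0 := fun h => hn0 (by exact_mod_cast h)
    exact_mod_cast (by omega : (1:ℤ) ≤ n)
  have hfin := En_finite n
  set F := hfin.toFinset with hF
  have hmemF : ∀ l ∈ F, l.1 ^ 2 + l.2 ^ 2 = n := fun l hl => hfin.mem_toFinset.mp hl
  have hNcard : (Nn n : ℝ) = (F.card : ℝ) := by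
    rw [Nn, Set.ncard_eq_toFinset_card _ hfin]
  have hNpos : 0 < F.card := by
    obtain ⟨a, b, hab⟩ := hn
    exact Finset.card_pos.mpr ⟨(a, b), hfin.mem_toFinset.mpr hab.symm⟩
  set N : ℝ := (F.card : ℝ) with hNdef
  have hN : 0 < N := by rw [hNdef]; exact_mod_cast hNpos
  set c : ℤ × ℤ → ℝ := fun l => Real.cos (2 * π * ((l.1 : ℝ) * x 0 + (l.2 : ℝ) * x 1)) with hcdef
  set sn : ℤ × ℤ → ℝ := fun l => Real.sin (2 * π * ((l.1 : ℝ) * x 0 + (l.2 : ℝ) * x 1)) with hsdef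
  set v : ℤ × ℤ → Fin 2 → ℝ := fun l => ![(l.1 : ℝ), (l.2 : ℝ)] with hvdef
  have hr_eq : rn n x = N⁻¹ * ∑ l ∈ F, c l := by
    rw [rn, hNcard, ← finsum_mem_coe_finset, hfin.coe_toFinset]
  have hD_eq : ∀ i : Fin 2, Dn n x i = -(2 * π) * N⁻¹ * ∑ l ∈ F, sn l * v l i := by
    intro i; rw [Dn, hNcard, ← finsum_mem_coe_finset, hfin.coe_toFinset]
  have hH_eq : ∀ i j : Fin 2,
      Hn n x i j = -(4 * π ^ 2) * N⁻¹ * ∑ l ∈ F, c l * v l i * v l j := by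
    intro i j
    show -(4 * π ^ 2) * (Nn n : ℝ)⁻¹ * _ = _
    rw [hNcard, ← finsum_mem_coe_finset, hfin.coe_toFinset]
  -- basic bounds
  have hvsq : ∀ (i : Fin 2) (l : ℤ × ℤ), l ∈ F → v l i ^ 2 ≤ (n : ℝ) := by
    intro i l hl
    have h := hmemF l hl
    have h1 : (l.1 : ℝ) ^ 2 + (l.2 : ℝ) ^ 2 = (n : ℝ) := by exact_mod_cast congrArg (Int.cast : ℤ → ℝ) h
    fin_cases i <;> simp [hvdef] <;> nlinarith [sq_nonneg ((l.1 : ℝ)), sq_nonneg ((l.2 : ℝ))]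
  have hc2 : ∀ l : ℤ × ℤ, c l ^ 2 ≤ 1 := fun l => Real.cos_sq_le_one _
  set Sc : ℝ := ∑ l ∈ F, c l with hScdef
  set Sc2 : ℝ := ∑ l ∈ F, c l ^ 2 with hSc2def
  have hSc2le : Sc2 ≤ N := by
    calc Sc2 ≤ ∑ l ∈ F, (1 : ℝ) := Finset.sum_le_sum fun l _ => hc2 l
    _ = N := by simp [hNdef, Finset.sum_const]
  have hCS : Sc ^ 2 ≤ N * Sc2 := by
    have h := Finset.sum_mul_sq_le_sq_mul_sq F (fun _ => (1 : ℝ)) c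
    simpa [hNdef, hScdef, hSc2def] using h
  have h1 : rn n x ^ 2 ≤ 1 := by
    rw [hr_eq, inv_mul_eq_div, div_pow, div_le_one (by positivity)]
    calc Sc ^ 2 ≤ N * Sc2 := hCS
    _ ≤ N * N := by nlinarith
    _ = N ^ 2 := (sq N).symm
  have hone : 0 < 1 - rn n x ^ 2 := by
    rcases lt_or_eq_of_le h1 with h | h
    · linarith
    · exact absurd h hr
  have hr2le : rn n x ^ 2 ≤ Sc2 / N := by
    rw [hr_eq, inv_mul_eq_div, div_pow, div_le_div_iff₀ (by positivity) hN]
    calc Sc ^ 2 * N ≤ N * Sc2 * N := by nlinarith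
    _ = Sc2 * N ^ 2 := by ring
  -- gradient bound
  have hssum : ∑ l ∈ F, sn l ^ 2 = N - Sc2 := by
    have h : ∀ l ∈ F, sn l ^ 2 = 1 - c l ^ 2 := fun l _ => Real.sin_sq _
    rw [Finset.sum_congr rfl h, Finset.sum_sub_distrib]
    simp [hNdef, hSc2def]
  have hsumv : ∀ i : Fin 2, ∑ l ∈ F, v l i ^ 2 ≤ N * n := by
    intro i
    calc ∑ l ∈ F, v l i ^ 2 ≤ ∑ l ∈ F, (n : ℝ) := Finset.sum_le_sum (hvsq i)
    _ = N * (n:ℝ) := by simp [hNdef, Finset.sum_const]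
  have hD : ∀ i : Fin 2, Dn n x i ^ 2 ≤ 4 * π ^ 2 * n * (1 - rn n x ^ 2) := by
    intro i
    have hCSi := Finset.sum_mul_sq_le_sq_mul_sq F sn (fun l => v l i)
    set Sv : ℝ := ∑ l ∈ F, sn l * v l i with hSvdef
    have hSv2 : Sv ^ 2 ≤ (N - Sc2) * (N * n) := by
      calc Sv ^ 2 ≤ (∑ l ∈ F, sn l ^ 2) * ∑ l ∈ F, v l i ^ 2 := hCSi
      _ ≤ (N - Sc2) * (N * n) := by
          rw [hssum]
          have h0 : 0 ≤ N - Sc2 := by linarith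
          have := hsumv i
          nlinarith [Finset.sum_nonneg (fun l (_ : l ∈ F) => sq_nonneg (v l i))]
    have hDsq : Dn n x i ^ 2 = 4 * π ^ 2 * N⁻¹ ^ 2 * Sv ^ 2 := by
      rw [hD_eq i, ← hSvdef]; ring
    have hNinv : N * N⁻¹ = 1 := mul_inv_cancel₀ (ne_of_gt hN)
    have hstep : N⁻¹ ^ 2 * Sv ^ 2 ≤ (n : ℝ) * (1 - rn n x ^ 2) := by
      have h2 : N⁻¹ ^ 2 * Sv ^ 2 ≤ N⁻¹ ^ 2 * ((N - Sc2) * (N * n)) := by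
        apply mul_le_mul_of_nonneg_left hSv2 (by positivity)
      have h3 : N⁻¹ ^ 2 * ((N - Sc2) * (N * n)) = (n : ℝ) * (1 - Sc2 / N) := by
        field_simp
      have h4 : (n : ℝ) * (1 - Sc2 / N) ≤ (n : ℝ) * (1 - rn n x ^ 2) := by
        apply mul_le_mul_of_nonneg_left _ (by linarith)
        linarith [hr2le]
      linarith
    rw [hDsq]
    nlinarith [Real.pi_pos]
  have hB : 0 < 4 * π ^ 2 * (n : ℝ) := by positivity
  have hDij : |Dn n x i * Dn n x j| ≤ 4 * π ^ 2 * n * (1 - rn n x ^ 2) := by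
    rw [abs_le]
    constructor
    · nlinarith [sq_nonneg (Dn n x i + Dn n x j), hD i, hD j]
    · nlinarith [sq_nonneg (Dn n x i - Dn n x j), hD i, hD j]
  -- Hessian bound
  have hH : |Hn n x i j| ≤ 4 * π ^ 2 * n := by
    rw [hH_eq i j]
    set SH : ℝ := ∑ l ∈ F, c l * v l i * v l j with hSHdef
    have hSH : |SH| ≤ N * n := by
      calc |SH| ≤ ∑ l ∈ F, |c l * v l i * v l j| := Finset.abs_sum_le_sum_abs _ _
      _ ≤ ∑ l ∈ F, (n : ℝ) := by
          apply Finset.sum_le_sum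
          intro l hl
          have h1 := hvsq i l hl
          have h2 := hvsq j l hl
          have h3 : |c l| ≤ 1 := Real.abs_cos_le_one _
          rw [abs_mul, abs_mul]
          have h4 : |v l i| * |v l j| ≤ (n : ℝ) := by
            nlinarith [abs_nonneg (v l i), abs_nonneg (v l j), sq_abs (v l i), sq_abs (v l j),
              sq_nonneg (|v l i| - |v l j|)]
          nlinarith [abs_nonneg (c l), abs_nonneg (v l i), abs_nonneg (v l j),
            mul_nonneg (abs_nonneg (v l i)) (abs_nonneg (v l j))]
      _ = N * (n:ℝ) := by simp [hNdef, Finset.sum_const]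
    rw [abs_mul, abs_mul]
    have hpi : |-(4 * π ^ 2)| = 4 * π ^ 2 := by
      rw [abs_neg, abs_of_pos (by positivity)]
    have hNi : |N⁻¹| = N⁻¹ := abs_of_pos (by positivity)
    rw [hpi, hNi]
    calc 4 * π ^ 2 * N⁻¹ * |SH| ≤ 4 * π ^ 2 * N⁻¹ * (N * n) := by
          apply mul_le_mul_of_nonneg_left hSH (by positivity)
    _ = 4 * π ^ 2 * n := by field_simp
  have habsr : |rn n x| ≤ 1 := by
    nlinarith [sq_abs (rn n x), abs_nonneg (rn n x)]
  constructor
  · -- X bound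
    simp only [Xmat, Matrix.of_apply]
    rw [abs_mul, abs_neg, abs_of_pos (by positivity : (0:ℝ) < 2 / (4 * π ^ 2 * (n:ℝ) * (1 - rn n x ^ 2)))]
    calc 2 / (4 * π ^ 2 * (n:ℝ) * (1 - rn n x ^ 2)) * |Dn n x i * Dn n x j|
        ≤ 2 / (4 * π ^ 2 * (n:ℝ) * (1 - rn n x ^ 2)) * (4 * π ^ 2 * n * (1 - rn n x ^ 2)) := by
          apply mul_le_mul_of_nonneg_left hDij (by positivity)
    _ = 2 := by field_simp
    _ ≤ 4 := by norm_num
  · -- Y bound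
    simp only [Ymat, Matrix.of_apply]
    rw [abs_mul, abs_neg, abs_of_pos (by positivity : (0:ℝ) < 2 / (4 * π ^ 2 * (n:ℝ)))]
    have hinner : |Hn n x i j + rn n x / (1 - rn n x ^ 2) * (Dn n x i * Dn n x j)| ≤
        2 * (4 * π ^ 2 * n) := by
      calc |Hn n x i j + rn n x / (1 - rn n x ^ 2) * (Dn n x i * Dn n x j)|
          ≤ |Hn n x i j| + |rn n x / (1 - rn n x ^ 2) * (Dn n x i * Dn n x j)| := abs_add_le _ _
      _ ≤ 4 * π ^ 2 * n + 4 * π ^ 2 * n := by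
          have h5 : |rn n x / (1 - rn n x ^ 2) * (Dn n x i * Dn n x j)| ≤ 4 * π ^ 2 * n := by
            rw [abs_mul, abs_div, abs_of_pos hone]
            calc |rn n x| / (1 - rn n x ^ 2) * |Dn n x i * Dn n x j|
                ≤ 1 / (1 - rn n x ^ 2) * (4 * π ^ 2 * n * (1 - rn n x ^ 2)) := by
                  apply mul_le_mul (by gcongr) hDij (abs_nonneg _) (by positivity)
            _ = 4 * π ^ 2 * n := by field_simp
          linarith [hH]
      _ = 2 * (4 * π ^ 2 * n) := by ring
    calc 2 / (4 * π ^ 2 * (n:ℝ)) * |Hn n x i j + rn n x / (1 - rn n x ^ 2) * (Dn n x i * Dn n x j)|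
        ≤ 2 / (4 * π ^ 2 * (n:ℝ)) * (2 * (4 * π ^ 2 * n)) := by
          apply mul_le_mul_of_nonneg_left hinner (by positivity)
    _ = 4 := by field_simp; ring
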